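/- Let n ≥ 2 be an integer having at least two distinct prime divisors, let rad(n) denote the radical of n (the product of the distinct primes dividing n), and let H be the induced subgraph of the comaximal graph Γ(ℤ_n) on the vertex set {x ∈ ℤ_n : x ≠ 0, x is not a unit of ℤ_n, and rad(n) does not divide the canonical representative of x}. Then D_i(Γ(ℤ_n), x) = φ(n)·x + x^{n/rad(n)} · D_i(H, x). -/

import Mathlib

open Polynomial

/-- The comaximal graph of `ℤ/nℤ`: distinct `a, b` are adjacent iff the ideal
generated by `a` and `b` is the whole ring. -/
def comaximalGraph (n : ℕ) : SimpleGraph (ZMod n) where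
  Adj a b := a ≠ b ∧ Ideal.span ({a, b} : Set (ZMod n)) = ⊤
  symm := by
    constructor
    rintro a b ⟨hab, h⟩
    refine ⟨hab.symm, ?_⟩
    rwa [Set.pair_comm]
  loopless := by
    constructor
    rintro a ⟨h, -⟩
    exact h rfl

/-- `S` is an independent dominating set of `G`. -/
def IsIndepDomSet {V : Type*} (G : SimpleGraph V) (S : Finset V) : Prop :=
  (∀ a ∈ S, ∀ b ∈ S, ¬ G.Adj a b) ∧ ∀ v : V, v ∉ S → ∃ u ∈ S, G.Adj u v

/-- The independent domination polynomial `D_i(G, x) = Σ_k d_i(G,k) x^k`. -/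
noncomputable def indepDomPoly {V : Type*} (G : SimpleGraph V) : Polynomial ℝ :=
  ∑ k ∈ Finset.range (Nat.card V + 1),
    Polynomial.C ((Nat.card {S : Finset V // IsIndepDomSet G S ∧ S.card = k}) : ℝ) *
      Polynomial.X ^ k

/-- The independence polynomial `I(G, x) = Σ_k c_k x^k`. -/
noncomputable def indepPoly {V : Type*} (G : SimpleGraph V) : Polynomial ℝ :=
  ∑ k ∈ Finset.range (Nat.card V + 1),
    Polynomial.C ((Nat.card {S : Finset V //
        (∀ a ∈ S, ∀ b ∈ S, ¬ G.Adj a b) ∧ S.card = k}) : ℝ) *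
      Polynomial.X ^ k

/-- The radical of a natural number: the product of its distinct prime divisors. -/
def natRadical (n : ℕ) : ℕ := n.primeFactors.prod id

/-- For `n` with at least two distinct prime divisors,
`D_i(Γ(ℤ_n), x) = φ(n)·x + x^(n/rad n) · D_i(H, x)`, where `H` is the induced subgraph on
nonzero non-units whose canonical representative is not divisible by `rad n`. -/
lemma card_units_filter (n : ℕ) [NeZero n] :
    (Finset.univ.filter fun x : ZMod n => IsUnit x).card = n.totient := by
  classical
  calc (Finset.univ.filter fun x : ZMod n => IsUnit x).card
      = Fintype.card {x : ZMod n // IsUnit x} := (Fintype.card_subtype _).symm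
    _ = Fintype.card {x : ZMod n // Nat.Coprime x.val n} := by
        refine Fintype.card_congr (Equiv.subtypeEquivRight fun x => ?_)
        conv_lhs => rw [← ZMod.natCast_rightInverse x]
        exact ZMod.isUnit_iff_coprime x.val n
    _ = Fintype.card (ZMod n)ˣ := (Fintype.card_congr ZMod.unitsEquivCoprime).symm
    _ = n.totient := ZMod.card_units_eq_totient n

lemma exists_prime_of_not_isUnit (n : ℕ) [NeZero n] (b : ZMod n) (hb : ¬ IsUnit b) :
    ∃ p : ℕ, p.Prime ∧ p ∣ b.val ∧ p ∣ n := by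
  have h1 : ¬ Nat.Coprime b.val n := by
    intro hc
    exact hb (by simpa [ZMod.natCast_rightInverse b] using (ZMod.isUnit_iff_coprime b.val n).2 hc)
  have hp := (Nat.gcd b.val n).minFac_prime h1
  exact ⟨_, hp, (Nat.minFac_dvd _).trans (Nat.gcd_dvd_left _ _),
    (Nat.minFac_dvd _).trans (Nat.gcd_dvd_right _ _)⟩

lemma not_isUnit_of_rad_dvd (n : ℕ) (hn : 2 ≤ n) (x : ZMod n)
    (hx : natRadical n ∣ x.val) : ¬ IsUnit x := by
  haveI : NeZero n := ⟨by omega⟩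
  intro hu
  have hne : n ≠ 1 := by omega
  obtain ⟨p, hp, hpn⟩ := Nat.exists_prime_and_dvd hne
  have hpr : p ∣ natRadical n :=
    Finset.dvd_prod_of_mem id (Nat.mem_primeFactors.2 ⟨hp, hpn, NeZero.ne n⟩)
  have hpv : p ∣ x.val := hpr.trans hx
  have hc : Nat.Coprime x.val n :=
    (ZMod.isUnit_iff_coprime x.val n).1 (by rwa [ZMod.natCast_rightInverse x])
  have : p ∣ 1 := hc ▸ Nat.dvd_gcd hpv hpn
  have := Nat.le_of_dvd one_pos this
  have := hp.two_le
  omega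

lemma adj_of_isUnit (n : ℕ) {a b : ZMod n} (ha : IsUnit a) (hab : a ≠ b) :
    (comaximalGraph n).Adj a b :=
  ⟨hab, Ideal.eq_top_of_isUnit_mem _ (Ideal.subset_span (Set.mem_insert a {b})) ha⟩

lemma not_adj_nilpotent (n : ℕ) (hn : 2 ≤ n) {a b : ZMod n}
    (ha : natRadical n ∣ a.val) (hb : ¬ IsUnit b) :
    ¬ (comaximalGraph n).Adj a b := by
  haveI : NeZero n := ⟨by omega⟩
  rintro ⟨-, htop⟩
  obtain ⟨x, y, hxy⟩ := Ideal.mem_span_pair.1 (htop ▸ Submodule.mem_top : (1 : ZMod n) ∈ _)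
  obtain ⟨p, hp, hpb, hpn⟩ := exists_prime_of_not_isUnit n b hb
  haveI : Fact p.Prime := ⟨hp⟩
  have hpr : p ∣ natRadical n :=
    Finset.dvd_prod_of_mem id (Nat.mem_primeFactors.2 ⟨hp, hpn, NeZero.ne n⟩)
  have hpa : p ∣ a.val := hpr.trans ha
  let f := ZMod.castHom hpn (ZMod p)
  have hfa : f a = 0 := by
    rw [← ZMod.natCast_rightInverse a, map_natCast]
    exact (ZMod.natCast_eq_zero_iff _ _).2 hpa
  have hfb : f b = 0 := by
    rw [← ZMod.natCast_rightInverse b, map_natCast]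
    exact (ZMod.natCast_eq_zero_iff _ _).2 hpb
  have : (1 : ZMod p) = 0 := by
    have := congrArg f hxy
    simpa [hfa, hfb] using this.symm
  exact one_ne_zero this

lemma card_nilpotents (n : ℕ) [NeZero n] (hn : 2 ≤ n) :
    (Finset.univ.filter fun x : ZMod n => natRadical n ∣ x.val).card = n / natRadical n := by
  classical
  have hdvd : natRadical n ∣ n := by simpa [natRadical] using Nat.prod_primeFactors_dvd n
  have hpos : 0 < natRadical n := by
    rcases Nat.eq_zero_or_pos (natRadical n) with h | h
    · exfalso; rw [h] at hdvd; omega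
    · exact h
  set r := natRadical n
  have hrm : r * (n / r) = n := Nat.mul_div_cancel' hdvd
  rw [← Finset.card_range (n / r)]
  symm
  apply Finset.card_bij' (fun i _ => ((r * i : ℕ) : ZMod n)) (fun x _ => x.val / r)
  · intro i hi
    simp only [Finset.mem_range] at hi
    have hlt : r * i < n := by calc r * i < r * (n / r) := (Nat.mul_lt_mul_left hpos).2 hi
      _ = n := hrm
    simp only [Finset.mem_filter, Finset.mem_univ, true_and]
    rw [ZMod.val_cast_of_lt hlt]
    exact ⟨i, rfl⟩
  · intro x hx
    simp only [Finset.mem_filter, Finset.mem_univ, true_and] at hx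
    simp only [Finset.mem_range]
    have : x.val < n := ZMod.val_lt x
    exact Nat.div_lt_of_lt_mul (by omega)
  · intro i hi
    simp only [Finset.mem_range] at hi
    have hlt : r * i < n := by calc r * i < r * (n / r) := (Nat.mul_lt_mul_left hpos).2 hi
      _ = n := hrm
    rw [ZMod.val_cast_of_lt hlt, Nat.mul_div_cancel_left _ hpos]
  · intro x hx
    simp only [Finset.mem_filter, Finset.mem_univ, true_and] at hx
    rw [Nat.mul_div_cancel' hx, ZMod.natCast_rightInverse x]

lemma singleton_unit_isIndepDom (n : ℕ) {u : ZMod n} (hu : IsUnit u) :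
    IsIndepDomSet (comaximalGraph n) {u} := by
  constructor
  · intro a ha b hb
    rw [Finset.mem_singleton] at ha hb
    subst ha; subst hb
    exact (comaximalGraph n).irrefl
  · intro v hv
    rw [Finset.mem_singleton] at hv
    exact ⟨u, Finset.mem_singleton_self u, adj_of_isUnit n hu (Ne.symm hv)⟩

lemma eq_singleton_of_isUnit_mem (n : ℕ) {S : Finset (ZMod n)} {u : ZMod n}
    (hS : IsIndepDomSet (comaximalGraph n) S) (huS : u ∈ S) (hu : IsUnit u) : S = {u} := by
  ext b
  rw [Finset.mem_singleton]
  constructor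
  · intro hb
    by_contra hbu
    exact hS.1 u huS b hb (adj_of_isUnit n hu (fun h => hbu h.symm))
  · rintro rfl; exact huS

lemma main_count (n : ℕ) (hn : 2 ≤ n) (k : ℕ) :
    Nat.card {S : Finset (ZMod n) // IsIndepDomSet (comaximalGraph n) S ∧ S.card = k} =
      (if k = 1 then n.totient else 0) +
      (if n / natRadical n ≤ k then
        Nat.card {S : Finset {x : ZMod n | x ≠ 0 ∧ ¬ IsUnit x ∧ ¬ (natRadical n ∣ x.val)} //
          IsIndepDomSet ((comaximalGraph n).induce
            {x : ZMod n | x ≠ 0 ∧ ¬ IsUnit x ∧ ¬ (natRadical n ∣ x.val)}) S ∧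
          S.card = k - n / natRadical n}
       else 0) := by
  classical
  haveI : NeZero n := ⟨by omega⟩
  set r := natRadical n with hr
  set m := n / r with hm
  set sH : Set (ZMod n) := {x | x ≠ 0 ∧ ¬ IsUnit x ∧ ¬ (r ∣ x.val)} with hsH
  set G := comaximalGraph n with hG
  have hdvd : r ∣ n := by simpa [hr, natRadical] using Nat.prod_primeFactors_dvd n
  have hrpos : 0 < r := by
    rcases Nat.eq_zero_or_pos r with h0 | h0
    · exfalso; rw [h0] at hdvd; omega
    · exact h0
  set N : Finset (ZMod n) := Finset.univ.filter (fun x => r ∣ x.val) with hN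
  have hNcard : N.card = m := card_nilpotents n hn
  have hmemN : ∀ x : ZMod n, x ∈ N ↔ r ∣ x.val := by intro x; simp [hN]
  have hNnonunit : ∀ x ∈ N, ¬ IsUnit x := fun x hx =>
    not_isUnit_of_rad_dvd n hn x ((hmemN x).1 hx)
  have hzeroN : (0 : ZMod n) ∈ N := (hmemN 0).2 (by simp)
  have hmem_sH : ∀ x : ZMod n, x ∈ sH ↔ (¬ IsUnit x ∧ ¬ r ∣ x.val) := by
    intro x
    constructor
    · rintro ⟨-, h2, h3⟩; exact ⟨h2, h3⟩
    · rintro ⟨h2, h3⟩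
      refine ⟨?_, h2, h3⟩
      rintro rfl
      exact h3 (by simp)
  have hNsub : ∀ S : Finset (ZMod n), IsIndepDomSet G S → (¬ ∃ u ∈ S, IsUnit u) → N ⊆ S := by
    intro S hS hnou x hx
    by_contra hxS
    obtain ⟨u, huS, hadj⟩ := hS.2 x hxS
    exact not_adj_nilpotent n hn ((hmemN x).1 hx) (fun h => hnou ⟨u, huS, h⟩) hadj.symm
  rw [Nat.card_eq_fintype_card, Fintype.card_subtype]
  rw [Nat.card_eq_fintype_card, Fintype.card_subtype]
  rw [← Finset.card_filter_add_card_filter_not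
    (s := Finset.univ.filter (fun S : Finset (ZMod n) => IsIndepDomSet G S ∧ S.card = k))
    (p := fun S => ∃ u ∈ S, IsUnit u)]
  rw [Finset.filter_filter, Finset.filter_filter]
  congr 1
  -- Part A: sets containing a unit
  · by_cases hk : k = 1
    · subst hk
      rw [if_pos rfl, ← card_units_filter n]
      have himg : (Finset.univ.filter fun S : Finset (ZMod n) =>
          (IsIndepDomSet G S ∧ S.card = 1) ∧ ∃ u ∈ S, IsUnit u)
          = (Finset.univ.filter fun x : ZMod n => IsUnit x).image (fun u => {u}) := by
        ext S
        simp only [Finset.mem_filter, Finset.mem_univ, true_and, Finset.mem_image]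
        constructor
        · rintro ⟨⟨hind, hcard⟩, u, huS, hu⟩
          exact ⟨u, hu, (eq_singleton_of_isUnit_mem n hind huS hu).symm⟩
        · rintro ⟨u, hu, rfl⟩
          exact ⟨⟨singleton_unit_isIndepDom n hu, Finset.card_singleton u⟩,
            u, Finset.mem_singleton_self u, hu⟩
      rw [himg, Finset.card_image_of_injective _ Finset.singleton_injective]
    · rw [if_neg hk, Finset.card_eq_zero, Finset.filter_eq_empty_iff]
      rintro S -
      rintro ⟨⟨hind, hcard⟩, u, huS, hu⟩
      rw [eq_singleton_of_isUnit_mem n hind huS hu, Finset.card_singleton] at hcard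
      exact hk hcard.symm
  -- Part B: sets without units
  · by_cases hmk : m ≤ k
    · rw [if_pos hmk]
      apply Finset.card_bij' (fun S _ => S.subtype (fun x => x ∈ sH))
        (fun S' _ => N ∪ S'.map (Function.Embedding.subtype _))
      -- forward membership
      · intro S hS
        simp only [Finset.mem_filter, Finset.mem_univ, true_and] at hS ⊢
        obtain ⟨⟨⟨hind, hdom⟩, hcard⟩, hnou⟩ := hS
        have hnu : ∀ x ∈ S, ¬ IsUnit x := fun x hx hu => hnou ⟨x, hx, hu⟩
        have hNS : N ⊆ S := hNsub S ⟨hind, hdom⟩ hnou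
        refine ⟨⟨?_, ?_⟩, ?_⟩
        · intro a ha b hb hadj
          rw [Finset.mem_subtype] at ha hb
          exact hind _ ha _ hb hadj
        · intro v hv
          have hvS : (↑v : ZMod n) ∉ S := fun h => hv (Finset.mem_subtype.2 h)
          obtain ⟨u, huS, hadj⟩ := hdom _ hvS
          have hru : ¬ r ∣ u.val := by
            intro hru
            exact not_adj_nilpotent n hn hru ((hmem_sH ↑v).1 v.2).1 hadj
          exact ⟨⟨u, (hmem_sH u).2 ⟨hnu u huS, hru⟩⟩, Finset.mem_subtype.2 huS, hadj⟩
        · rw [Finset.card_subtype]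
          have hdecomp : S.filter (fun x => x ∈ sH) = S \ N := by
            ext x
            simp only [Finset.mem_filter, Finset.mem_sdiff, hmem_sH, hmemN]
            constructor
            · rintro ⟨hxS, -, hxr⟩; exact ⟨hxS, hxr⟩
            · rintro ⟨hxS, hxr⟩; exact ⟨hxS, hnu x hxS, hxr⟩
          rw [hdecomp, Finset.card_sdiff_of_subset hNS, hcard, hNcard]
      -- backward membership
      · intro S' hS'
        simp only [Finset.mem_filter, Finset.mem_univ, true_and] at hS' ⊢
        obtain ⟨⟨hind', hdom'⟩, hcard'⟩ := hS'
        have hmemU : ∀ x : ZMod n, x ∈ N ∪ S'.map (Function.Embedding.subtype _) ↔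
            (r ∣ x.val ∨ ∃ b ∈ S', (↑b : ZMod n) = x) := by
          intro x
          simp [Finset.mem_union, hmemN, Finset.mem_map, Function.Embedding.coe_subtype]
        have hUnonunit : ∀ x ∈ N ∪ S'.map (Function.Embedding.subtype _), ¬ IsUnit x := by
          intro x hx
          rcases (hmemU x).1 hx with hxr | ⟨b, -, rfl⟩
          · exact not_isUnit_of_rad_dvd n hn x hxr
          · exact ((hmem_sH ↑b).1 b.2).1
        refine ⟨⟨⟨?_, ?_⟩, ?_⟩, ?_⟩
        · intro a ha b hb hadj
          rcases (hmemU a).1 ha with har | ⟨a', ha', rfl⟩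
          · exact not_adj_nilpotent n hn har (hUnonunit b hb) hadj
          rcases (hmemU b).1 hb with hbr | ⟨b', hb', rfl⟩
          · exact not_adj_nilpotent n hn hbr (hUnonunit _ ha) hadj.symm
          exact hind' a' ha' b' hb' hadj
        · intro v hv
          by_cases hvu : IsUnit v
          · have h0 : ¬ IsUnit (0 : ZMod n) := not_isUnit_of_rad_dvd n hn 0 (by simp)
            have hv0 : v ≠ 0 := fun h => h0 (h ▸ hvu)
            exact ⟨0, Finset.mem_union_left _ hzeroN, (adj_of_isUnit n hvu hv0).symm⟩
          · by_cases hrv : r ∣ v.val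
            · exact absurd (Finset.mem_union_left _ ((hmemN v).2 hrv)) hv
            · have hvsH : v ∈ sH := (hmem_sH v).2 ⟨hvu, hrv⟩
              have hvS' : (⟨v, hvsH⟩ : ↥sH) ∉ S' := fun h =>
                hv ((hmemU v).2 (Or.inr ⟨_, h, rfl⟩))
              obtain ⟨u', hu', hadj⟩ := hdom' _ hvS'
              exact ⟨↑u', (hmemU ↑u').2 (Or.inr ⟨u', hu', rfl⟩), hadj⟩
        · have hdisj : Disjoint N (S'.map (Function.Embedding.subtype _)) := by
            rw [Finset.disjoint_left]
            intro x hxN hxM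
            rw [Finset.mem_map] at hxM
            obtain ⟨b, -, rfl⟩ := hxM
            exact ((hmem_sH ↑b).1 b.2).2 ((hmemN _).1 hxN)
          rw [Finset.card_union_of_disjoint hdisj, Finset.card_map, hNcard, hcard']
          omega
        · rintro ⟨u, hu, huu⟩
          exact hUnonunit u hu huu
      -- left inverse
      · intro S hS
        simp only [Finset.mem_filter, Finset.mem_univ, true_and] at hS
        obtain ⟨⟨⟨hind, hdom⟩, hcard⟩, hnou⟩ := hS
        have hnu : ∀ x ∈ S, ¬ IsUnit x := fun x hx hu => hnou ⟨x, hx, hu⟩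
        have hNS : N ⊆ S := hNsub S ⟨hind, hdom⟩ hnou
        rw [Finset.subtype_map]
        ext x
        simp only [Finset.mem_union, Finset.mem_filter, hmemN]
        constructor
        · rintro (hxN | ⟨hxS, -⟩)
          · exact hNS ((hmemN x).2 hxN)
          · exact hxS
        · intro hxS
          by_cases hrx : r ∣ x.val
          · exact Or.inl hrx
          · exact Or.inr ⟨hxS, (hmem_sH x).2 ⟨hnu x hxS, hrx⟩⟩
      -- right inverse
      · intro S' hS'
        ext a
        rw [Finset.mem_subtype]
        simp only [Finset.mem_union, hmemN, Finset.mem_map, Function.Embedding.coe_subtype]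
        constructor
        · rintro (har | ⟨b, hb, hba⟩)
          · exact absurd har ((hmem_sH ↑a).1 a.2).2
          · rwa [← Subtype.coe_injective hba]
        · intro ha
          exact Or.inr ⟨a, ha, rfl⟩
    · rw [if_neg hmk, Finset.card_eq_zero, Finset.filter_eq_empty_iff]
      rintro S -
      rintro ⟨⟨hind, hcard⟩, hnou⟩
      have := Finset.card_le_card (hNsub S hind hnou)
      rw [hNcard, hcard] at this
      omega


lemma coeff_indepDomPoly {V : Type*} [Fintype V] (G : SimpleGraph V) (k : ℕ) :
    (indepDomPoly G).coeff k =
      ((Nat.card {S : Finset V // IsIndepDomSet G S ∧ S.card = k}) : ℝ) := by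
  classical
  unfold indepDomPoly
  rw [Polynomial.finset_sum_coeff]
  simp only [Polynomial.coeff_C_mul, Polynomial.coeff_X_pow, mul_ite, mul_one, mul_zero]
  rw [Finset.sum_ite_eq (Finset.range (Nat.card V + 1)) k]
  split_ifs with hk
  · rfl
  · symm
    rw [Finset.mem_range, Nat.card_eq_fintype_card] at hk
    have : IsEmpty {S : Finset V // IsIndepDomSet G S ∧ S.card = k} := by
      refine ⟨fun ⟨S, _, hc⟩ => ?_⟩
      have := Finset.card_le_univ S
      omega
    simp [Nat.card_of_isEmpty]

theorem stmt_2 (n : ℕ) (hn : 2 ≤ n)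
    (h : ∃ p q : ℕ, p.Prime ∧ q.Prime ∧ p ≠ q ∧ p ∣ n ∧ q ∣ n) :
    indepDomPoly (comaximalGraph n) =
      Polynomial.C ((Nat.totient n : ℝ)) * Polynomial.X +
        Polynomial.X ^ (n / natRadical n) *
          indepDomPoly ((comaximalGraph n).induce
            {x : ZMod n | x ≠ 0 ∧ ¬ IsUnit x ∧ ¬ (natRadical n ∣ x.val)}) := by
  classical
  haveI : NeZero n := ⟨by omega⟩
  ext k
  rw [coeff_indepDomPoly, main_count n hn k]
  rw [Polynomial.coeff_add, Polynomial.coeff_C_mul, Polynomial.coeff_X, Polynomial.X_pow_mul,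
    Polynomial.coeff_mul_X_pow', coeff_indepDomPoly]
  push_cast
  split_ifs with h1 h2 h3 <;> first | (exfalso; omega) | ring
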